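/- Every locally graded non-sofic group is ω-non-sofic; that is, it admits a strictly descending chain H_0 > H_1 > H_2 > ⋯ of non-sofic subgroups indexed by the natural numbers. -/

import Mathlib

/-- The normalized Hamming distance between two permutations of `Fin n`:
the number of points where they differ, divided by `n`. -/
noncomputable def permHammingDist {n : ℕ} (σ τ : Equiv.Perm (Fin n)) : ℝ :=
  ((Finset.univ.filter fun i => σ i ≠ τ i).card : ℝ) / n

/-- A group `G` is sofic if for every finite subset `F ⊆ G` and every `ε > 0` there exist
`n ≥ 1` and a map `θ` from `F` to `Sym(Fin n)` (extended to all of `G`) such that: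
(i) `θ` is an `ε`-approximate homomorphism on `F`;
(ii) `θ` almost sends the identity to the identity;
(iii) distinct elements of `F` are sent to permutations at Hamming distance at least `1/4`. -/
def IsSofic (G : Type*) [Group G] : Prop :=
  ∀ (F : Finset G) (ε : ℝ), 0 < ε →
    ∃ n : ℕ, 1 ≤ n ∧ ∃ θ : G → Equiv.Perm (Fin n),
      (∀ g h : G, g ∈ F → h ∈ F → g * h ∈ F →
        permHammingDist (θ g * θ h) (θ (g * h)) < ε) ∧
      ((1 : G) ∈ F → permHammingDist (θ 1) 1 < ε) ∧
      (∀ x y : G, x ∈ F → y ∈ F → x ≠ y → 1 / 4 ≤ permHammingDist (θ x) (θ y))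

/-- A group is minimal non-sofic if it is not sofic but every proper subgroup is sofic. -/
def IsMinimalNonSofic (G : Type*) [Group G] : Prop :=
  ¬ IsSofic G ∧ ∀ H : Subgroup G, H ≠ ⊤ → IsSofic H

/-- A group is locally graded if every nontrivial finitely generated subgroup has a
proper subgroup of finite index. -/
def IsLocallyGraded (G : Type*) [Group G] : Prop :=
  ∀ H : Subgroup G, H ≠ ⊥ → H.FG → ∃ K : Subgroup H, K ≠ ⊤ ∧ K.FiniteIndex

open Finset in
lemma isSofic_of_subsingleton (G : Type*) [Group G] [Subsingleton G] : IsSofic G := by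
  intro F ε hε
  refine ⟨1, le_refl 1, fun _ => 1, ?_, ?_, ?_⟩
  · intro g h _ _ _
    simpa [permHammingDist] using hε
  · intro _
    simpa [permHammingDist] using hε
  · intro x y _ _ hxy
    exact absurd (Subsingleton.elim x y) hxy

open Finset in
lemma IsSofic.of_mulEquiv {G H : Type*} [Group G] [Group H] (e : G ≃* H)
    (h : IsSofic H) : IsSofic G := by
  classical
  intro F ε hε
  obtain ⟨n, hn, θ, h1, h2, h3⟩ := h (F.image e) ε hε
  refine ⟨n, hn, fun g => θ (e g), ?_, ?_, ?_⟩
  · intro g h hg hh hgh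
    have := h1 (e g) (e h) (mem_image_of_mem e hg) (mem_image_of_mem e hh)
      (by simpa [map_mul] using mem_image_of_mem (⇑e) hgh)
    simpa [map_mul] using this
  · intro hone
    simpa [map_one] using h2 (by simpa [map_one] using mem_image_of_mem (⇑e) hone)
  · intro x y hx hy hxy
    exact h3 _ _ (mem_image_of_mem e hx) (mem_image_of_mem e hy)
      (fun hc => hxy (e.injective hc))

open Finset in
lemma exists_fg_nonSofic {G : Type*} [Group G] (hG : ¬ IsSofic G) :
    ∃ H : Subgroup G, Group.FG H ∧ ¬ IsSofic H := by
  by_contra hc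
  push_neg at hc
  apply hG
  intro F ε hε
  classical
  set H := Subgroup.closure (F : Set G) with hH
  have hFG : Group.FG H := (Group.fg_iff_subgroup_fg H).2 ⟨F, rfl⟩
  have hmem : ∀ g ∈ F, g ∈ H := fun g hg => Subgroup.subset_closure hg
  set F' : Finset H := F.attach.image (fun x => (⟨x.1, hmem x.1 x.2⟩ : H)) with hF'
  obtain ⟨n, hn, θ, h1, h2, h3⟩ := hc H hFG F' ε hε
  have memF' : ∀ (g : G) (hg : g ∈ F) (hg' : g ∈ H), (⟨g, hg'⟩ : H) ∈ F' := by
    intro g hg hg'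
    exact mem_image.2 ⟨⟨g, hg⟩, mem_attach _ _, rfl⟩
  refine ⟨n, hn, fun g => if hg : g ∈ H then θ ⟨g, hg⟩ else 1, ?_, ?_, ?_⟩
  · intro g h hg hh hgh
    simp only [dif_pos (hmem g hg), dif_pos (hmem h hh), dif_pos (hmem _ hgh)]
    have := h1 ⟨g, hmem g hg⟩ ⟨h, hmem h hh⟩ (memF' g hg _) (memF' h hh _)
      (by exact memF' _ hgh (hmem _ hgh))
    exact this
  · intro hone
    simp only [dif_pos (hmem 1 hone)]
    exact h2 (memF' 1 hone (one_mem H))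
  · intro x y hx hy hxy
    simp only [dif_pos (hmem x hx), dif_pos (hmem y hy)]
    exact h3 _ _ (memF' x hx _) (memF' y hy _)
      (fun hc' => hxy (congrArg Subtype.val hc'))

open Finset in
lemma permCongr_hamming_card {α : Type*} [Fintype α] [DecidableEq α] {n : ℕ} (e : α ≃ Fin n)
    (σ τ : Equiv.Perm α) :
    (Finset.univ.filter fun i => (e.permCongr σ) i ≠ (e.permCongr τ) i).card
      = (Finset.univ.filter fun x => σ x ≠ τ x).card := by
  classical
  apply Finset.card_bij (fun i _ => e.symm i)
  · intro i hi
    simp only [mem_filter, mem_univ, true_and] at hi ⊢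
    simp only [Equiv.permCongr_apply] at hi
    exact fun hc => hi (by rw [hc])
  · intro a _ b _ hab
    exact e.symm.injective hab
  · intro x hx
    refine ⟨e x, ?_, by simp⟩
    simp only [mem_filter, mem_univ, true_and, Equiv.permCongr_apply, Equiv.symm_apply_apply] at hx ⊢
    simpa using hx

open Finset in
lemma card_filter_prod {α β : Type*} [Fintype α] [Fintype β] (p : α × β → Prop)
    [DecidablePred p] :
    (Finset.univ.filter p).card = ∑ a : α, (Finset.univ.filter fun b => p (a, b)).card := by
  classical
  calc (univ.filter p).card
      = Fintype.card {x : α × β // p (x.1, x.2)} := by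
        rw [Fintype.card_subtype]
    _ = Fintype.card ((a : α) × {b // p (a, b)}) :=
        Fintype.card_congr (Equiv.subtypeProdEquivSigmaSubtype fun a b => p (a, b))
    _ = ∑ a, Fintype.card {b // p (a, b)} := Fintype.card_sigma
    _ = ∑ a, (univ.filter fun b => p (a, b)).card := by
        simp [Fintype.card_subtype]

lemma permCongr_mul {α : Type*} {n : ℕ} (e : α ≃ Fin n) (σ τ : Equiv.Perm α) :
    (e.permCongr σ) * (e.permCongr τ) = e.permCongr (σ * τ) := by
  ext i
  simp [Equiv.permCongr_apply, Equiv.Perm.mul_apply]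

lemma permCongr_one {α : Type*} {n : ℕ} (e : α ≃ Fin n) :
    e.permCongr (1 : Equiv.Perm α) = 1 := by
  ext i
  simp [Equiv.permCongr_apply]

open Finset in
lemma isSofic_of_finiteIndex {H : Type*} [Group H] (K : Subgroup H) [hFI : K.FiniteIndex]
    (hK : IsSofic K) : IsSofic H := by
  classical
  intro F ε hε
  haveI : Finite (H ⧸ K) := K.finite_quotient_of_finiteIndex
  haveI : Fintype (H ⧸ K) := Fintype.ofFinite _
  set m := Fintype.card (H ⧸ K) with hm
  have hm0 : 0 < m := Fintype.card_pos
  have hker : ∀ (g : H) (c : H ⧸ K), ((g • c).out)⁻¹ * g * c.out ∈ K := by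
    intro g c
    have h1 : (QuotientGroup.mk ((g • c).out) : H ⧸ K) = QuotientGroup.mk (g * c.out) := by
      rw [QuotientGroup.out_eq']
      conv_lhs => rw [← QuotientGroup.out_eq' c]
      rfl
    have h2 := QuotientGroup.eq.mp h1
    simpa [mul_assoc] using h2
  set κ : H → (H ⧸ K) → K := fun g c => ⟨((g • c).out)⁻¹ * g * c.out, hker g c⟩ with hκ
  have hcoc : ∀ (g h : H) (c : H ⧸ K), κ (g * h) c = κ g (h • c) * κ h c := by
    intro g h c
    apply Subtype.ext
    simp only [hκ, MulMemClass.coe_mul, mul_smul]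
    group
  have honeκ : ∀ c, κ 1 c = 1 := by
    intro c
    apply Subtype.ext
    simp [hκ, one_smul]
  have hinj : ∀ (x y : H) (c : H ⧸ K), x • c = y • c → κ x c = κ y c → x = y := by
    intro x y c hc hk
    have h2 := congrArg Subtype.val hk
    simp only [hκ, hc] at h2
    exact mul_left_cancel (mul_right_cancel h2)
  set F' : Finset K := ((insert 1 F) ×ˢ (univ : Finset (H ⧸ K))).image
    (fun p => κ p.1 p.2) with hF'
  obtain ⟨n, hn, θ, t1, t2, t3⟩ := hK F' ε hε
  have memF' : ∀ (g : H), g ∈ insert 1 F → ∀ c, κ g c ∈ F' := by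
    intro g hg c
    exact mem_image.2 ⟨(g, c), mem_product.2 ⟨hg, mem_univ c⟩, rfl⟩
  have hn0 : (0:ℝ) < n := by exact_mod_cast hn
  have hmn0 : (0:ℝ) < (m : ℝ) * n := by positivity
  set Θ : H → Equiv.Perm ((H ⧸ K) × Fin n) :=
    fun g => Equiv.prodShear (MulAction.toPerm g) (fun c => θ (κ g c)) with hΘ
  have hΘapp : ∀ (g : H) (c : H ⧸ K) (i : Fin n), Θ g (c, i) = (g • c, θ (κ g c) i) :=
    fun g c i => rfl
  have hcard : Fintype.card ((H ⧸ K) × Fin n) = m * n := by simp [hm]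
  set e : ((H ⧸ K) × Fin n) ≃ Fin (m * n) := Fintype.equivFinOfCardEq hcard with he
  have key : ∀ σ τ : Equiv.Perm ((H ⧸ K) × Fin n),
      permHammingDist (e.permCongr σ) (e.permCongr τ)
        = ((Finset.univ.filter fun x : (H ⧸ K) × Fin n => σ x ≠ τ x).card : ℝ)
            / ((m : ℝ) * n) := by
    intro σ τ
    unfold permHammingDist
    rw [permCongr_hamming_card]
    push_cast
    ring
  refine ⟨m * n, Nat.one_le_iff_ne_zero.2 (Nat.mul_ne_zero hm0.ne' (by omega)),
    fun g => e.permCongr (Θ g), ?_, ?_, ?_⟩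
  · -- approximate multiplicativity
    intro g h hg hh hgh
    rw [permCongr_mul, key, div_lt_iff₀ hmn0]
    have hfib : ∀ c : H ⧸ K,
        ((Finset.univ.filter fun i : Fin n =>
            (Θ g * Θ h) (c, i) ≠ Θ (g * h) (c, i)).card : ℝ) < ε * n := by
      intro c
      have h₁ := t1 (κ g (h • c)) (κ h c) (memF' g (mem_insert_of_mem hg) _)
        (memF' h (mem_insert_of_mem hh) _)
        (by rw [← hcoc]; exact memF' _ (mem_insert_of_mem hgh) c)
      unfold permHammingDist at h₁
      rw [div_lt_iff₀ hn0] at h₁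
      refine lt_of_le_of_lt ?_ h₁
      apply Nat.cast_le.2
      apply Finset.card_le_card
      intro i hi
      simp only [mem_filter, mem_univ, true_and] at hi ⊢
      intro hc
      apply hi
      show Θ g (Θ h (c, i)) = Θ (g * h) (c, i)
      rw [hΘapp, hΘapp, hΘapp, hcoc g h c]
      refine Prod.ext (mul_smul g h c).symm ?_
      simpa [Equiv.Perm.mul_apply] using hc
    rw [card_filter_prod (fun x : (H ⧸ K) × Fin n => (Θ g * Θ h) x ≠ Θ (g * h) x)]
    push_cast
    calc (∑ c : H ⧸ K, ((Finset.univ.filter fun i : Fin n =>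
            (Θ g * Θ h) (c, i) ≠ Θ (g * h) (c, i)).card : ℝ))
        < ∑ _c : H ⧸ K, ε * n :=
          Finset.sum_lt_sum_of_nonempty (univ_nonempty) (fun c _ => hfib c)
      _ = m * (ε * n) := by simp [mul_comm, hm, Finset.card_univ]
      _ = ε * ((m : ℝ) * n) := by ring
  · -- identity
    intro _
    rw [show (1 : Equiv.Perm (Fin (m * n))) = e.permCongr 1 from (permCongr_one e).symm,
      key, div_lt_iff₀ hmn0]
    have hone' : (1 : K) ∈ F' := by
      have := memF' 1 (mem_insert_self 1 F) (QuotientGroup.mk 1)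
      rwa [honeκ] at this
    have h₂ := t2 hone'
    unfold permHammingDist at h₂
    rw [div_lt_iff₀ hn0] at h₂
    have hfib : ∀ c : H ⧸ K,
        ((Finset.univ.filter fun i : Fin n =>
            Θ 1 (c, i) ≠ (1 : Equiv.Perm ((H ⧸ K) × Fin n)) (c, i)).card : ℝ) < ε * n := by
      intro c
      refine lt_of_le_of_lt ?_ h₂
      apply Nat.cast_le.2
      apply Finset.card_le_card
      intro i hi
      simp only [mem_filter, mem_univ, true_and] at hi ⊢
      intro hc
      apply hi
      rw [hΘapp, honeκ, one_smul]
      show ((c : H ⧸ K), θ 1 i) = (c, i)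
      rw [show θ 1 i = i from hc]
    rw [card_filter_prod (fun x : (H ⧸ K) × Fin n =>
      Θ 1 x ≠ (1 : Equiv.Perm ((H ⧸ K) × Fin n)) x)]
    push_cast
    calc (∑ c : H ⧸ K, ((Finset.univ.filter fun i : Fin n =>
            Θ 1 (c, i) ≠ (1 : Equiv.Perm ((H ⧸ K) × Fin n)) (c, i)).card : ℝ))
        < ∑ _c : H ⧸ K, ε * n :=
          Finset.sum_lt_sum_of_nonempty (univ_nonempty) (fun c _ => hfib c)
      _ = m * (ε * n) := by simp [mul_comm, hm, Finset.card_univ]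
      _ = ε * ((m : ℝ) * n) := by ring
  · -- separation
    intro x y hx hy hxy
    rw [key, le_div_iff₀ hmn0]
    have hfib : ∀ c : H ⧸ K,
        (n : ℝ) / 4 ≤ ((Finset.univ.filter fun i : Fin n =>
            Θ x (c, i) ≠ Θ y (c, i)).card : ℝ) := by
      intro c
      by_cases hc : x • c = y • c
      · have hk : κ x c ≠ κ y c := fun hk => hxy (hinj x y c hc hk)
        have h₃ := t3 _ _ (memF' x (mem_insert_of_mem hx) c)
          (memF' y (mem_insert_of_mem hy) c) hk
        unfold permHammingDist at h₃
        rw [le_div_iff₀ hn0] at h₃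
        calc (n : ℝ) / 4 = 1 / 4 * n := by ring
          _ ≤ _ := h₃
          _ ≤ _ := by
            apply Nat.cast_le.2
            apply Finset.card_le_card
            intro i hi
            simp only [mem_filter, mem_univ, true_and] at hi ⊢
            intro hpair
            apply hi
            have := congrArg Prod.snd hpair
            rwa [hΘapp, hΘapp] at this
      · have hall : (Finset.univ.filter fun i : Fin n =>
            Θ x (c, i) ≠ Θ y (c, i)) = Finset.univ := by
          apply Finset.filter_true_of_mem
          intro i _
          intro hpair
          apply hc
          have := congrArg Prod.fst hpair
          rwa [hΘapp, hΘapp] at this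
        rw [hall, Finset.card_univ, Fintype.card_fin]
        have : (0:ℝ) ≤ n := hn0.le
        linarith
    rw [card_filter_prod (fun z : (H ⧸ K) × Fin n => Θ x z ≠ Θ y z)]
    push_cast
    calc (1:ℝ) / 4 * ((m : ℝ) * n) = ∑ _c : H ⧸ K, (n : ℝ) / 4 := by
          simp [hm, Finset.card_univ]; ring
      _ ≤ ∑ c : H ⧸ K, ((Finset.univ.filter fun i : Fin n =>
            Θ x (c, i) ≠ Θ y (c, i)).card : ℝ) :=
          Finset.sum_le_sum (fun c _ => hfib c)

/-- Every locally graded non-sofic group is ω-non-sofic: it admits a strictly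
descending chain of non-sofic subgroups indexed by ℕ. -/
theorem locallyGraded_nonSofic_omega (G : Type*) [Group G]
    (hlg : IsLocallyGraded G) (hG : ¬ IsSofic G) :
    ∃ H : ℕ → Subgroup G, StrictAnti H ∧ ∀ i, ¬ IsSofic (H i) := by
  classical
  have step : ∀ H : Subgroup G, Group.FG H → ¬ IsSofic H →
      ∃ H' : Subgroup G, H' < H ∧ Group.FG H' ∧ ¬ IsSofic H' := by
    intro H hFG hns
    have hbot : H ≠ ⊥ := by
      rintro rfl
      exact hns (isSofic_of_subsingleton _)
    obtain ⟨K, hKtop, hKfi⟩ := hlg H hbot ((Group.fg_iff_subgroup_fg H).1 hFG)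
    haveI := hKfi
    haveI : Group.FG H := hFG
    have hKns : ¬ IsSofic K := fun hs => hns (isSofic_of_finiteIndex K hs)
    haveI hKfg : Group.FG K := Subgroup.fg_of_index_ne_zero K
    have hinj : Function.Injective H.subtype := H.subtype_injective
    set e : K ≃* K.map H.subtype := Subgroup.equivMapOfInjective K H.subtype hinj with he
    refine ⟨K.map H.subtype, ?_, ?_, ?_⟩
    · have hle : K.map H.subtype ≤ H := Subgroup.map_subtype_le K
      refine lt_of_le_of_ne hle ?_
      intro heq
      apply hKtop
      apply Subgroup.map_injective hinj (N := G)
      rw [heq, ← MonoidHom.range_eq_map, Subgroup.range_subtype]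
    · exact Group.fg_of_surjective (f := e.toMonoidHom) e.surjective
    · exact fun hs => hKns (IsSofic.of_mulEquiv e hs)
  obtain ⟨H0, hH0fg, hH0ns⟩ := exists_fg_nonSofic hG
  let T := {H : Subgroup G // Group.FG H ∧ ¬ IsSofic H}
  have stepT : ∀ t : T, ∃ t' : T, t'.1 < t.1 := by
    rintro ⟨H, h1, h2⟩
    obtain ⟨H', hlt, hfg, hns⟩ := step H h1 h2
    exact ⟨⟨H', hfg, hns⟩, hlt⟩
  choose f hf using stepT
  let seq : ℕ → T := fun i => Nat.rec ⟨H0, hH0fg, hH0ns⟩ (fun _ t => f t) i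
  exact ⟨fun i => (seq i).1, strictAnti_nat_of_succ_lt (fun i => hf (seq i)),
    fun i => (seq i).2.2⟩
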